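/- For any r ∈ ℕ and z ∈ [−1,0], the function f(x) := (x − z)₊^r · cos(2π·ln|x − z|) (with f(x) := 0 for x ≤ z) belongs to W^r[−1,1] (i.e., f^(r−1) is absolutely continuous and f^(r) is essentially bounded), and for every polynomial P, limsup_{x→z} |f(x) − P(x)| / |x − z|^r ≥ 1. -/

import Mathlib

open Set

/-- The function `f(x) = (x−z)₊^r · cos(2π ln|x−z|)` (equal to `0` for `x ≤ z`). -/
noncomputable def stmt6f (r : ℕ) (z : ℝ) : ℝ → ℝ :=
  fun x => (max (x - z) 0) ^ r * Real.cos (2 * Real.pi * Real.log |x - z|)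

open Real Topology Filter

noncomputable def W6F (z : ℝ) (m : ℕ) (a b : ℝ) (x : ℝ) : ℝ :=
  (max (x - z) 0) ^ m * (a * Real.cos (2 * Real.pi * Real.log |x - z|)
    + b * Real.sin (2 * Real.pi * Real.log |x - z|))

lemma W6osc_bound (z a b x : ℝ) :
    |a * Real.cos (2 * Real.pi * Real.log |x - z|)
      + b * Real.sin (2 * Real.pi * Real.log |x - z|)| ≤ |a| + |b| := by
  calc |a * Real.cos (2 * Real.pi * Real.log |x - z|)
      + b * Real.sin (2 * Real.pi * Real.log |x - z|)|
      ≤ |a * Real.cos (2 * Real.pi * Real.log |x - z|)|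
        + |b * Real.sin (2 * Real.pi * Real.log |x - z|)| := abs_add_le _ _
    _ ≤ |a| * 1 + |b| * 1 := by
        rw [abs_mul, abs_mul]
        gcongr <;> first | exact Real.abs_cos_le_one _ | exact Real.abs_sin_le_one _
    _ = |a| + |b| := by ring

lemma W6F_bound (z : ℝ) (m : ℕ) (a b x : ℝ) :
    |W6F z m a b x| ≤ (|a| + |b|) * |x - z| ^ m := by
  rw [W6F, abs_mul]
  have hmax : |max (x - z) 0| ≤ |x - z| := by
    rw [abs_of_nonneg (le_max_right (x - z) 0)]
    exact max_le (le_abs_self _) (abs_nonneg _)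
  have h1 : |max (x - z) 0 ^ m| ≤ |x - z| ^ m := by
    rw [abs_pow]; exact pow_le_pow_left₀ (abs_nonneg _) hmax m
  have h2 := W6osc_bound z a b x
  calc |max (x - z) 0 ^ m| * |a * Real.cos (2 * Real.pi * Real.log |x - z|)
      + b * Real.sin (2 * Real.pi * Real.log |x - z|)|
      ≤ |x - z| ^ m * (|a| + |b|) :=
        mul_le_mul h1 h2 (abs_nonneg _) (pow_nonneg (abs_nonneg _) m)
    _ = (|a| + |b|) * |x - z| ^ m := mul_comm _ _

lemma W6F_zero (z : ℝ) (m : ℕ) (hm : 1 ≤ m) (a b : ℝ) (x : ℝ) (hx : x ≤ z) :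
    W6F z m a b x = 0 := by
  have : max (x - z) 0 = 0 := max_eq_right (by linarith)
  rw [W6F, this, zero_pow (by omega), zero_mul]

lemma W6log_hasDerivAt (z x : ℝ) (hx : z < x) :
    HasDerivAt (fun y => Real.log (y - z)) (x - z)⁻¹ x := by
  have h := (Real.hasDerivAt_log (x := x - z) (by linarith)).comp x
    ((hasDerivAt_id x).sub_const z)
  simpa [Function.comp_def] using h

lemma W6F_hasDerivAt_gt (z : ℝ) (n : ℕ) (a b x : ℝ) (hx : z < x) :
    HasDerivAt (W6F z (n+1) a b)
      (W6F z n ((n+1)*a + 2*Real.pi*b) ((n+1)*b - 2*Real.pi*a) x) x := by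
  have hev : ∀ᶠ y in 𝓝 x, z < y := eventually_gt_nhds hx
  have heq : (fun y => ((y - z)) ^ (n+1) * (a * Real.cos (2 * Real.pi * Real.log (y - z))
      + b * Real.sin (2 * Real.pi * Real.log (y - z)))) =ᶠ[𝓝 x] W6F z (n+1) a b := by
    filter_upwards [hev] with y hy
    rw [W6F, max_eq_left (by linarith), abs_of_pos (by linarith)]
  have hlog : HasDerivAt (fun y => Real.log (y - z)) (x - z)⁻¹ x := W6log_hasDerivAt z x hx
  have hc : HasDerivAt (fun y => Real.cos (2 * Real.pi * Real.log (y - z)))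
      (-Real.sin (2 * Real.pi * Real.log (x - z)) * (2 * Real.pi * (x - z)⁻¹)) x := by
    have := (Real.hasDerivAt_cos (2 * Real.pi * Real.log (x - z))).comp x
      (hlog.const_mul (2 * Real.pi))
    simpa [Function.comp_def] using this
  have hs : HasDerivAt (fun y => Real.sin (2 * Real.pi * Real.log (y - z)))
      (Real.cos (2 * Real.pi * Real.log (x - z)) * (2 * Real.pi * (x - z)⁻¹)) x := by
    have := (Real.hasDerivAt_sin (2 * Real.pi * Real.log (x - z))).comp x
      (hlog.const_mul (2 * Real.pi))
    simpa [Function.comp_def] using this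
  have hp : HasDerivAt (fun y => (y - z) ^ (n+1)) ((n+1) * (x - z) ^ n) x := by
    have := (hasDerivAt_pow (n+1) (x - z)).comp x ((hasDerivAt_id x).sub_const z)
    simpa [Function.comp_def] using this
  have hmain := hp.mul ((hc.const_mul a).add (hs.const_mul b))
  refine (heq.hasDerivAt_iff.mp ?_ : HasDerivAt (W6F z (n+1) a b) _ x)
  convert hmain using 1
  · rfl
  · rfl
  rw [W6F, max_eq_left (by linarith), abs_of_pos (by linarith)]
  have hxz : x - z ≠ 0 := by linarith
  simp only [Pi.add_apply]
  field_simp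
  ring

lemma W6F_hasDerivAt_lt (z : ℝ) (m : ℕ) (hm : 1 ≤ m) (a b x : ℝ) (hx : x < z) :
    HasDerivAt (W6F z m a b) 0 x := by
  have hev : ∀ᶠ y in 𝓝 x, y < z := eventually_lt_nhds hx
  have heq : (fun _ : ℝ => (0:ℝ)) =ᶠ[𝓝 x] W6F z m a b := by
    filter_upwards [hev] with y hy
    rw [W6F_zero z m hm a b y (le_of_lt hy)]
  exact heq.hasDerivAt_iff.mp (hasDerivAt_const x 0)

lemma W6F_hasDerivAt_root (z : ℝ) (n : ℕ) (hn : 1 ≤ n) (a b : ℝ) :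
    HasDerivAt (W6F z (n+1) a b) 0 z := by
  rw [hasDerivAt_iff_tendsto_slope]
  apply squeeze_zero_norm' (a := fun x => (|a| + |b|) * |x - z| ^ n)
  · filter_upwards [self_mem_nhdsWithin] with x (hx : x ≠ z)
    have hxz : x - z ≠ 0 := sub_ne_zero.mpr hx
    have h0 : W6F z (n+1) a b z = 0 := W6F_zero z (n+1) (by omega) a b z le_rfl
    rw [slope_def_field, h0, sub_zero, div_eq_mul_inv, norm_mul, norm_inv]
    have hb := W6F_bound z (n+1) a b x
    calc ‖W6F z (n+1) a b x‖ * ‖x - z‖⁻¹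
        ≤ ((|a| + |b|) * |x - z| ^ (n+1)) * |x - z|⁻¹ := by
          apply mul_le_mul_of_nonneg_right _ (by positivity)
          simpa [Real.norm_eq_abs] using hb
      _ = (|a| + |b|) * |x - z| ^ n := by
          rw [pow_succ]; field_simp
  · have hcont : Tendsto (fun x => (|a| + |b|) * |x - z| ^ n) (𝓝 z)
        (𝓝 ((|a| + |b|) * |z - z| ^ n)) := by
      apply Tendsto.const_mul
      exact ((continuous_abs.comp (continuous_sub_right z)).pow n).tendsto z
    rw [show |z - z| ^ n = 0 by simp [zero_pow (by omega : n ≠ 0)], mul_zero] at hcont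
    exact hcont.mono_left nhdsWithin_le_nhds

lemma W6F_hasDerivAt (z : ℝ) (n : ℕ) (hn : 1 ≤ n) (a b x : ℝ) :
    HasDerivAt (W6F z (n+1) a b)
      (W6F z n ((n+1)*a + 2*Real.pi*b) ((n+1)*b - 2*Real.pi*a) x) x := by
  rcases lt_trichotomy x z with h | h | h
  · rw [W6F_zero z n hn _ _ x (le_of_lt h)]
    exact W6F_hasDerivAt_lt z (n+1) (by omega) a b x h
  · rw [h, W6F_zero z n hn _ _ z le_rfl]
    exact W6F_hasDerivAt_root z n hn a b
  · exact W6F_hasDerivAt_gt z n a b x h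

lemma W6F_deriv (z : ℝ) (n : ℕ) (hn : 1 ≤ n) (a b : ℝ) :
    deriv (W6F z (n+1) a b)
      = W6F z n ((n+1)*a + 2*Real.pi*b) ((n+1)*b - 2*Real.pi*a) := by
  funext x
  exact (W6F_hasDerivAt z n hn a b x).deriv

lemma W6F_continuous (z : ℝ) (m : ℕ) (hm : 1 ≤ m) (a b : ℝ) :
    Continuous (W6F z m a b) := by
  rw [continuous_iff_continuousAt]
  intro x
  rcases eq_or_ne x z with h | h
  · rw [h]
    unfold ContinuousAt
    rw [W6F_zero z m hm a b z le_rfl]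
    apply squeeze_zero_norm' (a := fun y => (|a| + |b|) * |y - z| ^ m)
    · filter_upwards with y
      simpa [Real.norm_eq_abs] using W6F_bound z m a b y
    · have hcont : Tendsto (fun y => (|a| + |b|) * |y - z| ^ m) (𝓝 z)
          (𝓝 ((|a| + |b|) * |z - z| ^ m)) :=
        (continuous_const.mul ((continuous_abs.comp (continuous_sub_right z)).pow m)).tendsto z
      simpa [zero_pow (by omega : m ≠ 0)] using hcont
  · have hlog : ContinuousAt (fun y => Real.log |y - z|) x := by
      apply Real.continuousAt_log (by simpa [sub_eq_zero, abs_eq_zero] using h) |>.comp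
      exact (continuous_abs.comp (continuous_sub_right z)).continuousAt
    have h1 : ContinuousAt (fun y => max (y - z) 0 ^ m) x :=
      (((continuous_sub_right z).max continuous_const).pow m).continuousAt
    exact h1.mul (((Real.continuous_cos.continuousAt.comp
        (hlog.const_mul (2*Real.pi))).const_mul a).add
      ((Real.continuous_sin.continuousAt.comp (hlog.const_mul (2*Real.pi))).const_mul b))

lemma W6F_contDiff (z : ℝ) : ∀ (k m : ℕ), k + 1 ≤ m → ∀ a b : ℝ,
    ContDiff ℝ (k : WithTop ℕ∞) (W6F z m a b) := by
  intro k
  induction k with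
  | zero =>
    intro m hm a b
    simpa using (contDiff_zero (𝕜 := ℝ)).mpr (W6F_continuous z m hm a b)
  | succ k ih =>
    intro m hm a b
    obtain ⟨n, rfl⟩ : ∃ n, m = n + 1 := ⟨m - 1, by omega⟩
    have hn : 1 ≤ n := by omega
    rw [show ((k+1 : ℕ) : WithTop ℕ∞) = (k : WithTop ℕ∞) + 1 by exact_mod_cast rfl]
    rw [contDiff_succ_iff_deriv]
    refine ⟨fun x => (W6F_hasDerivAt z n hn a b x).differentiableAt, ?_, ?_⟩
    · intro h; simp at h
    · rw [W6F_deriv z n hn a b]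
      exact ih n (by omega) _ _

lemma stmt6f_eq (r : ℕ) (z : ℝ) : stmt6f r z = W6F z r 1 0 := by
  funext x; simp [stmt6f, W6F]

noncomputable def W6co (r : ℕ) : ℕ → ℝ × ℝ
  | 0 => (1, 0)
  | k+1 => (((r - k : ℕ) : ℝ) * (W6co r k).1 + 2*Real.pi*(W6co r k).2,
      ((r - k : ℕ) : ℝ) * (W6co r k).2 - 2*Real.pi*(W6co r k).1)

lemma W6iterWithin (z : ℝ) (r : ℕ) (hr : 1 ≤ r) (s : Set ℝ) (hs : UniqueDiffOn ℝ s) :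
    ∀ k, k ≤ r - 1 → EqOn (iteratedDerivWithin k (W6F z r 1 0) s)
      (W6F z (r - k) (W6co r k).1 (W6co r k).2) s := by
  intro k
  induction k with
  | zero =>
    intro _ x hx
    simp [iteratedDerivWithin_zero, W6co]
  | succ k ih =>
    intro hk x hx
    have hk' : k ≤ r - 1 := by omega
    rw [iteratedDerivWithin_succ]
    rw [derivWithin_congr (ih hk') (ih hk' hx)]
    obtain ⟨n, hn⟩ : ∃ n, r - k = n + 1 := ⟨r - k - 1, by omega⟩
    have hn1 : 1 ≤ n := by omega
    have hd := (W6F_hasDerivAt z n hn1 (W6co r k).1 (W6co r k).2 x).hasDerivWithinAt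
      (s := s)
    rw [hn]
    rw [hd.derivWithin (hs x hx)]
    have h1 : r - (k + 1) = n := by omega
    have h2 : ((n : ℝ) + 1) = ((r - k : ℕ) : ℝ) := by
      rw [hn]; push_cast; ring
    rw [h1, W6co, h2]

lemma W6F_hasDerivAt_gt0 (z a b x : ℝ) (hx : z < x) :
    HasDerivAt (W6F z 1 a b) (W6F z 0 (a + 2*Real.pi*b) (b - 2*Real.pi*a) x) x := by
  have h := W6F_hasDerivAt_gt z 0 a b x hx
  simpa using h

lemma W6F_lipschitz (z : ℝ) (a b : ℝ) :
    LipschitzOnWith ((|a| + |b| + (|a + 2*Real.pi*b| + |b - 2*Real.pi*a|)).toNNReal)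
      (W6F z 1 a b) (Icc (-1:ℝ) 1) := by
  set C1 := |a| + |b| with hC1
  set C2 := |a + 2*Real.pi*b| + |b - 2*Real.pi*a| with hC2
  have hC1n : 0 ≤ C1 := by positivity
  have hC2n : 0 ≤ C2 := by positivity
  have key : ∀ x y : ℝ, x ≤ y → |W6F z 1 a b y - W6F z 1 a b x| ≤ (C1 + C2) * (y - x) := by
    intro x y hxy
    rcases le_or_gt y z with hy | hy
    · rw [W6F_zero z 1 le_rfl a b y hy, W6F_zero z 1 le_rfl a b x (hxy.trans hy)]
      simp only [sub_self, abs_zero]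
      exact mul_nonneg (by positivity) (by linarith)
    · rcases le_or_gt x z with hx | hx
      · rw [W6F_zero z 1 le_rfl a b x hx, sub_zero]
        have hb := W6F_bound z 1 a b y
        rw [pow_one, abs_of_pos (by linarith : (0:ℝ) < y - z)] at hb
        calc |W6F z 1 a b y| ≤ C1 * (y - z) := hb
          _ ≤ (C1 + C2) * (y - x) := by nlinarith
      · have hmvt := Convex.norm_image_sub_le_of_norm_hasDerivWithin_le
          (f := W6F z 1 a b) (f' := fun t => W6F z 0 (a + 2*Real.pi*b) (b - 2*Real.pi*a) t)
          (s := Icc x y) (C := C2)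
          (fun t ht => (W6F_hasDerivAt_gt0 z a b t (lt_of_lt_of_le hx ht.1)).hasDerivWithinAt)
          (fun t ht => by
            have := W6F_bound z 0 (a + 2*Real.pi*b) (b - 2*Real.pi*a) t
            simpa [Real.norm_eq_abs] using this)
          (convex_Icc x y) (left_mem_Icc.mpr hxy) (right_mem_Icc.mpr hxy)
        rw [Real.norm_eq_abs, Real.norm_eq_abs, abs_of_nonneg (by linarith : (0:ℝ) ≤ y - x)]
          at hmvt
        nlinarith
  rw [lipschitzOnWith_iff_dist_le_mul]
  intro x hx y hy
  rw [Real.dist_eq, Real.dist_eq, Real.coe_toNNReal _ (by positivity)]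
  rcases le_total x y with h | h
  · rw [abs_sub_comm, abs_sub_comm x y, abs_of_nonneg (by linarith : (0:ℝ) ≤ y - x)]
    exact key x y h
  · rw [abs_of_nonneg (by linarith : (0:ℝ) ≤ x - y)]
    exact key y x h

lemma W6part3 (r : ℕ) (hr : 1 ≤ r) (z : ℝ) (hz : z ∈ Icc (-1:ℝ) 0)
    (P : Polynomial ℝ) (e δ : ℝ) (he : 0 < e) (hδ : 0 < δ) :
    ∃ x ∈ Icc (-1:ℝ) 1, x ≠ z ∧ |x - z| < δ ∧
      (1 - e) * |x - z| ^ r < |stmt6f r z x - P.eval x| := by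
  by_contra hcon
  push_neg at hcon
  -- hcon : ∀ x ∈ Icc (-1) 1, x ≠ z → |x-z| < δ → |f x - P x| ≤ (1-e)*|x-z|^r
  have hf : ∀ v : ℝ, stmt6f r z (z + Real.exp v)
      = Real.exp v ^ r * Real.cos (2 * Real.pi * v) := by
    intro v
    have h1 : z + Real.exp v - z = Real.exp v := by ring
    show max (z + Real.exp v - z) 0 ^ r * _ = _
    rw [h1, max_eq_left (Real.exp_pos v).le, abs_of_pos (Real.exp_pos v), Real.log_exp]
  have hcos1 : ∀ m : ℕ, Real.cos (2 * Real.pi * (-(m:ℝ) - 1)) = 1 := by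
    intro m
    have : 2 * Real.pi * (-(m:ℝ) - 1) = ((-(m:ℤ) - 1 : ℤ) : ℝ) * (2 * Real.pi) := by
      push_cast; ring
    rw [this, Real.cos_int_mul_two_pi]
  have hcos2 : ∀ m : ℕ, Real.cos (2 * Real.pi * (-(m:ℝ) - 1 - 1/2)) = -1 := by
    intro m
    have : 2 * Real.pi * (-(m:ℝ) - 1 - 1/2)
        = Real.pi + ((-(m:ℤ) - 2 : ℤ) : ℝ) * (2 * Real.pi) := by
      push_cast; ring
    rw [this, Real.cos_add_int_mul_two_pi, Real.cos_pi]
  -- choose M with exp(-(M:ℝ)-1) < δ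
  obtain ⟨M, hM⟩ : ∃ M : ℕ, Real.exp (-(M:ℝ) - 1) < δ := by
    obtain ⟨M, hM⟩ := exists_nat_gt (1/δ)
    refine ⟨M, ?_⟩
    have h1 : (M:ℝ) + 1 ≤ Real.exp ((M:ℝ) + 1) := by
      have := Real.add_one_le_exp ((M:ℝ) + 1)
      linarith
    have h2 : 1/δ < Real.exp ((M:ℝ) + 1) := by linarith
    have h3 : Real.exp (-(M:ℝ) - 1) = (Real.exp ((M:ℝ) + 1))⁻¹ := by
      rw [← Real.exp_neg]; ring_nf
    rw [h3]
    rw [inv_lt_iff_one_lt_mul₀ (Real.exp_pos _)]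
    rw [div_lt_iff₀ hδ] at h2
    linarith
  set x : ℕ → ℝ := fun m => z + Real.exp (-(m:ℝ) - 1) with hxdef
  set y : ℕ → ℝ := fun m => z + Real.exp (-(m:ℝ) - 1 - 1/2) with hydef
  have hexp_le_one : ∀ m : ℕ, Real.exp (-(m:ℝ) - 1) ≤ 1 := by
    intro m
    rw [Real.exp_le_one_iff]
    have : (0:ℝ) ≤ m := Nat.cast_nonneg m
    linarith
  have hxmem : ∀ m : ℕ, x m ∈ Icc (-1:ℝ) 1 := by
    intro m
    constructor
    · have := Real.exp_pos (-(m:ℝ) - 1); have := hz.1; simp only [hxdef]; linarith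
    · have := hexp_le_one m; have := hz.2; simp only [hxdef]; linarith
  have hymem : ∀ m : ℕ, y m ∈ Icc (-1:ℝ) 1 := by
    intro m
    have h1 : Real.exp (-(m:ℝ) - 1 - 1/2) ≤ Real.exp (-(m:ℝ) - 1) :=
      Real.exp_le_exp.mpr (by linarith)
    constructor
    · have := Real.exp_pos (-(m:ℝ) - 1 - 1/2); have := hz.1; simp only [hydef]; linarith
    · have := hexp_le_one m; have := hz.2; simp only [hydef]; linarith
  -- positivity of P at x (M+m), negativity at y (M+m)
  have hdist : ∀ m : ℕ, M ≤ m → Real.exp (-(m:ℝ) - 1) < δ := by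
    intro m hm
    refine lt_of_le_of_lt ?_ hM
    apply Real.exp_le_exp.mpr
    have : (M:ℝ) ≤ m := Nat.cast_le.mpr hm
    linarith
  have hPpos : ∀ m : ℕ, M ≤ m → 0 < P.eval (x m) := by
    intro m hm
    set t := Real.exp (-(m:ℝ) - 1) with ht
    have htpos : 0 < t := Real.exp_pos _
    have h1 : x m ≠ z := by simp only [hxdef]; intro h; nlinarith
    have h2 : |x m - z| = t := by
      simp only [hxdef]; rw [show z + t - z = t by ring, abs_of_pos htpos]
    have h3 := hcon (x m) (hxmem m) h1 (by rw [h2]; exact hdist m hm)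
    rw [h2] at h3
    have h4 : stmt6f r z (x m) = t ^ r := by
      simp only [hxdef]; rw [hf, hcos1, mul_one]
    rw [h4] at h3
    have h5 : 0 < t ^ r := pow_pos htpos r
    rw [abs_sub_le_iff] at h3
    nlinarith [h3.1]
  have hPneg : ∀ m : ℕ, M ≤ m → P.eval (y m) < 0 := by
    intro m hm
    set t := Real.exp (-(m:ℝ) - 1 - 1/2) with ht
    have htpos : 0 < t := Real.exp_pos _
    have h1 : y m ≠ z := by simp only [hydef]; intro h; nlinarith
    have h2 : |y m - z| = t := by
      simp only [hydef]; rw [show z + t - z = t by ring, abs_of_pos htpos]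
    have h3 := hcon (y m) (hymem m) h1 (by
      rw [h2]
      refine lt_of_le_of_lt ?_ (hdist m hm)
      exact Real.exp_le_exp.mpr (by linarith))
    rw [h2] at h3
    have h4 : stmt6f r z (y m) = -(t ^ r) := by
      simp only [hydef]; rw [hf, hcos2]; ring
    rw [h4] at h3
    have h5 : 0 < t ^ r := pow_pos htpos r
    rw [abs_sub_le_iff] at h3
    nlinarith [h3.2]
  -- roots between y and x
  have hyx : ∀ m : ℕ, y m ≤ x m := by
    intro m
    simp only [hxdef, hydef]
    have : Real.exp (-(m:ℝ) - 1 - 1/2) ≤ Real.exp (-(m:ℝ) - 1) :=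
      Real.exp_le_exp.mpr (by linarith)
    linarith
  have hroot : ∀ m : ℕ, ∃ c ∈ Icc (y (M + m)) (x (M + m)), P.eval c = 0 := by
    intro m
    have h0 : (0:ℝ) ∈ Icc (P.eval (y (M+m))) (P.eval (x (M+m))) :=
      ⟨(hPneg (M+m) (by omega)).le, (hPpos (M+m) (by omega)).le⟩
    have him := intermediate_value_Icc (hyx (M+m))
      ((P.continuous (R := ℝ)).continuousOn (s := Icc (y (M+m)) (x (M+m))))
    obtain ⟨c, hc1, hc2⟩ := him h0
    exact ⟨c, hc1, hc2⟩
  choose g hg1 hg2 using hroot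
  -- g is strictly antitone, hence injective
  have hanti : StrictAnti g := by
    intro i j hij
    have h1 : g j ≤ x (M + j) := (hg1 j).2
    have h2 : y (M + i) ≤ g i := (hg1 i).1
    have h3 : x (M + j) < y (M + i) := by
      simp only [hxdef, hydef]
      have : Real.exp (-((M+j : ℕ):ℝ) - 1) < Real.exp (-((M+i : ℕ):ℝ) - 1 - 1/2) := by
        apply Real.exp_lt_exp.mpr
        push_cast
        have : (i:ℝ) + 1 ≤ j := by exact_mod_cast Nat.succ_le_of_lt hij
        linarith
      linarith
    linarith
  have hPzero : P = 0 := by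
    apply Polynomial.eq_zero_of_infinite_isRoot
    apply Set.infinite_of_injective_forall_mem (f := g) hanti.injective
    intro m
    exact hg2 m
  have := hPpos M le_rfl
  rw [hPzero] at this
  simp at this

/-- `f(x) = (x−z)₊^r cos(2π ln|x−z|)` belongs to `W^r[−1,1]`
(formalized: `f ∈ C^(r−1)[−1,1]` and `f^(r−1)` is Lipschitz on `[−1,1]`, which is
equivalent to absolute continuity of `f^(r−1)` with `f^(r)` essentially bounded),
and for every polynomial `P`, `limsup_{x→z} |f(x)−P(x)|/|x−z|^r ≥ 1`. -/
theorem stmt6 (r : ℕ) (hr : 1 ≤ r) (z : ℝ) (hz : z ∈ Icc (-1:ℝ) 0) :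
    ContDiffOn ℝ (r - 1) (stmt6f r z) (Icc (-1) 1) ∧
    (∃ C : NNReal,
      LipschitzOnWith C (iteratedDerivWithin (r - 1) (stmt6f r z) (Icc (-1) 1))
        (Icc (-1) 1)) ∧
    (∀ P : Polynomial ℝ, ∀ e δ : ℝ, 0 < e → 0 < δ → ∃ x ∈ Icc (-1:ℝ) 1,
      x ≠ z ∧ |x - z| < δ ∧ (1 - e) * |x - z| ^ r < |stmt6f r z x - P.eval x|) := by
  refine ⟨?_, ?_, fun P e δ he hδ => W6part3 r hr z hz P e δ he hδ⟩
  · rw [stmt6f_eq]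
    exact (W6F_contDiff z (r-1) r (by omega) 1 0).contDiffOn
  · set A := (W6co r (r-1)).1 with hA
    set B := (W6co r (r-1)).2 with hB
    refine ⟨(|A| + |B| + (|A + 2*Real.pi*B| + |B - 2*Real.pi*A|)).toNNReal, ?_⟩
    have hs : UniqueDiffOn ℝ (Icc (-1:ℝ) 1) := uniqueDiffOn_Icc (by norm_num)
    have heq := W6iterWithin z r hr (Icc (-1) 1) hs (r-1) le_rfl
    have h1 : r - (r-1) = 1 := by omega
    rw [h1] at heq
    have hlip := W6F_lipschitz z A B
    intro x hx y hy
    rw [stmt6f_eq, heq hx, heq hy]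
    exact hlip hx hy
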